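/- Let n ≥ 2, let A be a real n×n singular irreducible M-matrix, and let L_G and U_G be the FSAI factors associated with admissible patterns S_L and S_U. Let B be the leading principal submatrix of A of order n−1, and let L_F and U_F be the FSAI factors of B computed with the restricted patterns S_L ∩ {(i,j) : i,j ≤ n−1} and S_U ∩ {(i,j) : i,j ≤ n−1}, i.e., L_F is lower triangular with (L_F)_{ij} = 0 for (i,j) outside the restricted pattern and (L_F B)_{ij} = δ_{ij} on the restricted pattern, and analogously (B U_F)_{ij} = δ_{ij}. Then the leading principal submatrix of order n−1 of L_G A U_G equals L_F B U_F. -/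

import Mathlib

open Matrix

/-- The spectral radius of a real matrix: the maximum modulus of its complex
eigenvalues (supremum of moduli of elements of the complex spectrum). -/
noncomputable def specRad {n : ℕ} (B : Matrix (Fin n) (Fin n) ℝ) : ℝ :=
  sSup ((fun z : ℂ => ‖z‖) '' spectrum ℂ (B.map Complex.ofReal))

/-- A real square matrix is a Z-matrix if its off-diagonal entries are nonpositive. -/
def IsZMatrix {n : ℕ} (A : Matrix (Fin n) (Fin n) ℝ) : Prop :=
  ∀ i j, i ≠ j → A i j ≤ 0

/-- A Z-matrix `A` is a nonsingular M-matrix if `A = s • 1 - B` with `B`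
entrywise nonnegative and `s > ρ(B)`. -/
def IsNonsingularMMatrix {n : ℕ} (A : Matrix (Fin n) (Fin n) ℝ) : Prop :=
  IsZMatrix A ∧ ∃ (s : ℝ) (B : Matrix (Fin n) (Fin n) ℝ),
    (∀ i j, 0 ≤ B i j) ∧ specRad B < s ∧ A = s • (1 : Matrix (Fin n) (Fin n) ℝ) - B

/-- A Z-matrix `A` is a singular M-matrix if `A = ρ(B) • 1 - B` with `B`
entrywise nonnegative. -/
def IsSingularMMatrix {n : ℕ} (A : Matrix (Fin n) (Fin n) ℝ) : Prop :=
  IsZMatrix A ∧ ∃ B : Matrix (Fin n) (Fin n) ℝ,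
    (∀ i j, 0 ≤ B i j) ∧ A = specRad B • (1 : Matrix (Fin n) (Fin n) ℝ) - B

/-- A matrix is irreducible if its directed graph (edge `i → j` iff `A i j ≠ 0`)
is strongly connected. -/
def IsIrreducibleMatrix {n : ℕ} (A : Matrix (Fin n) (Fin n) ℝ) : Prop :=
  ∀ i j : Fin n, Relation.ReflTransGen (fun a b : Fin n => A a b ≠ 0) i j

/-- Lower triangular real matrix. -/
def IsLowerTri {n : ℕ} (L : Matrix (Fin n) (Fin n) ℝ) : Prop :=
  ∀ i j : Fin n, i < j → L i j = 0

/-- Upper triangular real matrix. -/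
def IsUpperTri {n : ℕ} (U : Matrix (Fin n) (Fin n) ℝ) : Prop :=
  ∀ i j : Fin n, j < i → U i j = 0

/-- `L` is an FSAI lower triangular factor of `A` for the pattern `S`:
`L` is lower triangular, vanishes off the pattern, and `(L * A) i j = δ i j`
on the pattern. -/
def IsFSAILowerFactor {n : ℕ} (A L : Matrix (Fin n) (Fin n) ℝ)
    (S : Set (Fin n × Fin n)) : Prop :=
  IsLowerTri L ∧ (∀ p : Fin n × Fin n, p ∉ S → L p.1 p.2 = 0) ∧
    ∀ p : Fin n × Fin n, p ∈ S → (L * A) p.1 p.2 = if p.1 = p.2 then 1 else 0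

/-- `U` is an FSAI upper triangular factor of `A` for the pattern `S`:
`U` is upper triangular, vanishes off the pattern, and `(A * U) i j = δ i j`
on the pattern. -/
def IsFSAIUpperFactor {n : ℕ} (A U : Matrix (Fin n) (Fin n) ℝ)
    (S : Set (Fin n × Fin n)) : Prop :=
  IsUpperTri U ∧ (∀ p : Fin n × Fin n, p ∉ S → U p.1 p.2 = 0) ∧
    ∀ p : Fin n × Fin n, p ∈ S → (A * U) p.1 p.2 = if p.1 = p.2 then 1 else 0

open Finset
open scoped ENNReal NNReal

lemma specRad_nonneg {n : ℕ} (B : Matrix (Fin n) (Fin n) ℝ) : 0 ≤ specRad B := by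
  apply Real.sSup_nonneg
  rintro x ⟨z, _, rfl⟩
  exact norm_nonneg z

variable {k : ℕ}

lemma powEntryNonneg {C : Matrix (Fin k) (Fin k) ℝ} (hC : ∀ i j, 0 ≤ C i j) (m : ℕ) :
    ∀ i j, 0 ≤ (C ^ m) i j := by
  induction m with
  | zero => intro i j; simp [Matrix.one_apply]; split <;> norm_num
  | succ m ih =>
    intro i j
    rw [pow_succ, Matrix.mul_apply]
    exact Finset.sum_nonneg fun l _ => mul_nonneg (ih i l) (hC l j)

lemma mulVecMono {C : Matrix (Fin k) (Fin k) ℝ} (hC : ∀ i j, 0 ≤ C i j)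
    {x y : Fin k → ℝ} (hxy : ∀ i, x i ≤ y i) (i : Fin k) :
    C.mulVec x i ≤ C.mulVec y i := by
  simp only [Matrix.mulVec, dotProduct]
  exact Finset.sum_le_sum fun j _ => mul_le_mul_of_nonneg_left (hxy j) (hC i j)

lemma powSubinvariant {C : Matrix (Fin k) (Fin k) ℝ} (hC : ∀ i j, 0 ≤ C i j)
    {w : Fin k → ℝ} {s : ℝ} (hs : 0 ≤ s) (h : ∀ i, s * w i ≤ C.mulVec w i) (m : ℕ) :
    ∀ i, s ^ m * w i ≤ (C ^ m).mulVec w i := by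
  induction m with
  | zero => intro i; simp [Matrix.one_mulVec]
  | succ m ih =>
    intro i
    have h1 : (C ^ (m+1)).mulVec w i = C.mulVec ((C ^ m).mulVec w) i := by
      rw [pow_succ', ← Matrix.mulVec_mulVec]
    rw [h1]
    have h2 : C.mulVec (fun j => s ^ m * w j) i ≤ C.mulVec ((C ^ m).mulVec w) i :=
      mulVecMono hC (fun j => ih j) i
    have h3 : C.mulVec (fun j => s ^ m * w j) i = s ^ m * C.mulVec w i := by
      simp only [Matrix.mulVec, dotProduct, Finset.mul_sum]
      exact Finset.sum_congr rfl fun j _ => by ring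
    have h4 : s ^ (m+1) * w i ≤ s ^ m * C.mulVec w i := by
      rw [pow_succ']
      calc s * s ^ m * w i = s ^ m * (s * w i) := by ring
      _ ≤ s ^ m * C.mulVec w i :=
        mul_le_mul_of_nonneg_left (h i) (pow_nonneg hs m)
    linarith

lemma powEntryMono {P : Matrix (Fin k) (Fin k) ℝ} (hP : ∀ i j, 0 ≤ P i j)
    (hdiag : ∀ j, 1 ≤ P j j) {a b : ℕ} (hab : a ≤ b) (i j : Fin k) :
    (P ^ a) i j ≤ (P ^ b) i j := by
  induction b with
  | zero => simp_all
  | succ b ih =>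
    rcases Nat.lt_or_ge a (b+1) with h | h
    · have h1 : (P ^ a) i j ≤ (P ^ b) i j := ih (by omega)
      have h2 : (P ^ b) i j ≤ (P ^ (b+1)) i j := by
        rw [pow_succ, Matrix.mul_apply]
        calc (P ^ b) i j = (P ^ b) i j * 1 := by ring
        _ ≤ (P ^ b) i j * P j j :=
          mul_le_mul_of_nonneg_left (hdiag j) (powEntryNonneg hP b i j)
        _ ≤ ∑ l, (P ^ b) i l * P l j := by
          apply Finset.single_le_sum (f := fun l => (P ^ b) i l * P l j)
            (fun l _ => mul_nonneg (powEntryNonneg hP b i l) (hP l j)) (Finset.mem_univ j)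
      linarith
    · have : a = b + 1 := by omega
      subst this; rfl

lemma existsPowPos {C : Matrix (Fin k) (Fin k) ℝ} (hC : ∀ i j, 0 ≤ C i j)
    (hirr : ∀ i j : Fin k, Relation.ReflTransGen (fun a b => C a b ≠ 0 ∨ a = b) i j) :
    ∃ N : ℕ, ∀ i j, 0 < ((1 + C) ^ N) i j := by
  have hP : ∀ i j, 0 ≤ (1 + C) i j := by
    intro i j
    have : (0:ℝ) ≤ (1 : Matrix (Fin k) (Fin k) ℝ) i j := by
      rw [Matrix.one_apply]; split <;> norm_num
    have := hC i j
    simp only [Matrix.add_apply]; linarith [hC i j, this]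
  have hdiag : ∀ j, 1 ≤ (1 + C) j j := by
    intro j
    simp only [Matrix.add_apply, Matrix.one_apply_eq]
    linarith [hC j j]
  have key : ∀ i j : Fin k, ∃ m : ℕ, 0 < ((1 + C) ^ m) i j := by
    intro i j
    induction hirr i j with
    | refl => exact ⟨0, by simp⟩
    | tail h e ih =>
      rename_i b c
      obtain ⟨m, hm⟩ := ih
      refine ⟨m + 1, ?_⟩
      have hbc : 0 < (1 + C) b c := by
        rcases e with h1 | h1
        · have := hC b c
          have hcb : 0 < C b c := lt_of_le_of_ne this (Ne.symm h1)
          have : (0:ℝ) ≤ (1 : Matrix (Fin k) (Fin k) ℝ) b c := by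
            rw [Matrix.one_apply]; split <;> norm_num
          simp only [Matrix.add_apply]; linarith
        · subst h1; exact lt_of_lt_of_le one_pos (hdiag b)
      rw [pow_succ, Matrix.mul_apply]
      calc (0:ℝ) < ((1+C)^m) i b * (1+C) b c := mul_pos hm hbc
      _ ≤ ∑ l, ((1+C)^m) i l * (1+C) l c :=
        Finset.single_le_sum (f := fun l => ((1+C)^m) i l * (1+C) l c)
          (fun l _ => mul_nonneg (powEntryNonneg hP m i l) (hP l c)) (Finset.mem_univ b)
  choose f hf using key
  refine ⟨Finset.univ.sup (fun p : Fin k × Fin k => f p.1 p.2), fun i j => ?_⟩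
  calc (0:ℝ) < ((1+C) ^ (f i j)) i j := hf i j
  _ ≤ _ := powEntryMono hP hdiag (Finset.le_sup (f := fun p : Fin k × Fin k => f p.1 p.2)
      (Finset.mem_univ (i,j))) i j

section Analytic

attribute [local instance] Matrix.linftyOpNormedAddCommGroup Matrix.linftyOpNormedRing
  Matrix.linftyOpNormedAlgebra

local instance : CompleteSpace (Matrix (Fin k) (Fin k) ℂ) :=
  (inferInstance : CompleteSpace (Fin k → Fin k → ℂ))

lemma map_pow_ofReal (C : Matrix (Fin k) (Fin k) ℝ) (m : ℕ) :
    (C.map Complex.ofReal) ^ m = (C ^ m).map Complex.ofReal := by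
  have h1 : C.map Complex.ofReal = Complex.ofRealHom.mapMatrix C := rfl
  rw [h1, ← map_pow]; rfl

lemma specRad_bddAbove (C : Matrix (Fin k) (Fin k) ℝ) :
    BddAbove ((fun z : ℂ => ‖z‖) '' spectrum ℂ (C.map Complex.ofReal)) := by
  obtain ⟨R, hR⟩ := (Metric.isBounded_iff_subset_closedBall 0).1
    (spectrum.isBounded (𝕜 := ℂ) (C.map Complex.ofReal))
  refine ⟨R, ?_⟩
  rintro x ⟨z, hz, rfl⟩
  have := hR hz
  simpa [Metric.mem_closedBall, Complex.dist_eq] using this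

lemma le_specRad_of_subinvariant {C : Matrix (Fin k) (Fin k) ℝ}
    (hC : ∀ i j, 0 ≤ C i j) {w : Fin k → ℝ} (hw : ∀ i, 0 < w i) (hk : 0 < k)
    {s : ℝ} (hs : 0 ≤ s) (h : ∀ i, s * w i ≤ C.mulVec w i) : s ≤ specRad C := by
  set M := C.map Complex.ofReal with hM
  obtain ⟨i0, -, hmax⟩ := Finset.exists_max_image Finset.univ w ⟨⟨0, hk⟩, Finset.mem_univ _⟩
  have hrow : ∀ m : ℕ, s ^ m ≤ ‖M ^ m‖ := by
    intro m
    have h1 : s ^ m * w i0 ≤ (C ^ m).mulVec w i0 := powSubinvariant hC hs h m i0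
    have h2 : (C ^ m).mulVec w i0 ≤ (∑ j, (C ^ m) i0 j) * w i0 := by
      rw [Finset.sum_mul]
      simp only [Matrix.mulVec, dotProduct]
      exact Finset.sum_le_sum fun j _ =>
        mul_le_mul_of_nonneg_left (hmax j (Finset.mem_univ j)) (powEntryNonneg hC m i0 j)
    have h3 : s ^ m ≤ ∑ j, (C ^ m) i0 j :=
      le_of_mul_le_mul_right (h1.trans h2) (hw i0)
    refine h3.trans ?_
    rw [hM, map_pow_ofReal]
    calc ∑ j, (C ^ m) i0 j = ((∑ j, ‖((C ^ m).map Complex.ofReal) i0 j‖₊ : NNReal) : ℝ) := by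
          push_cast
          refine Finset.sum_congr rfl fun j _ => ?_
          rw [Matrix.map_apply, Complex.norm_real, Real.norm_eq_abs,
            abs_of_nonneg (powEntryNonneg hC m i0 j)]
    _ ≤ ‖(C ^ m).map Complex.ofReal‖ := by
          rw [Matrix.linfty_opNorm_def]
          exact_mod_cast NNReal.coe_le_coe.mpr
            (Finset.le_sup (f := fun i => ∑ j, ‖((C ^ m).map Complex.ofReal) i j‖₊)
              (Finset.mem_univ i0))
  have hge : ENNReal.ofReal s ≤ spectralRadius ℂ M := by
    refine ge_of_tendsto (spectrum.pow_nnnorm_pow_one_div_tendsto_nhds_spectralRadius M) ?_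
    filter_upwards [Filter.eventually_ge_atTop 1] with m hm
    have hm0 : (m : ℝ) ≠ 0 := by
      have : (1:ℕ) ≤ m := hm
      positivity
    calc ENNReal.ofReal s = (ENNReal.ofReal s ^ m) ^ (1 / (m:ℝ)) := by
          rw [← ENNReal.rpow_natCast _ m, ← ENNReal.rpow_mul, mul_one_div_cancel hm0,
            ENNReal.rpow_one]
    _ ≤ ((‖M ^ m‖₊ : ℝ≥0∞)) ^ (1 / (m:ℝ)) := by
          refine ENNReal.rpow_le_rpow ?_ (by positivity)
          rw [← ENNReal.ofReal_pow hs, ← enorm_eq_nnnorm, ← ofReal_norm]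
          exact ENNReal.ofReal_le_ofReal (hrow m)
  have hle : spectralRadius ℂ M ≤ ENNReal.ofReal (specRad C) := by
    rw [spectralRadius]
    refine iSup₂_le fun z hz => ?_
    rw [← enorm_eq_nnnorm, ← ofReal_norm]
    apply ENNReal.ofReal_le_ofReal
    exact le_csSup (specRad_bddAbove C) ⟨z, hz, rfl⟩
  have := hge.trans hle
  rwa [ENNReal.ofReal_le_ofReal_iff (specRad_nonneg C)] at this

end Analytic

lemma key_det_ne_zero {k : ℕ} (hk : 0 < k) {A : Matrix (Fin k) (Fin k) ℝ}
    (hA : IsSingularMMatrix A) (hirr : IsIrreducibleMatrix A)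
    {t : ℕ} (e : Fin t → Fin k) (he : Function.Injective e)
    (i0 : Fin k) (hi0 : ∀ a, e a ≠ i0) :
    (A.submatrix e e).det ≠ 0 := by
  classical
  obtain ⟨hZ, C, hC, hAeq⟩ := hA
  set r := specRad C with hr_def
  have hr : 0 ≤ r := specRad_nonneg C
  have hAapp : ∀ i j, A i j = r * (if i = j then 1 else 0) - C i j := by
    intro i j
    rw [hAeq]
    simp [Matrix.sub_apply, Matrix.smul_apply, Matrix.one_apply]
  intro hdet
  obtain ⟨x, hx0, hxker⟩ := (Matrix.exists_mulVec_eq_zero_iff).2 hdet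
  -- the eigen-equation on the submatrix
  have hCx : ∀ a, ∑ b, C (e a) (e b) * x b = r * x a := by
    intro a
    have h1 : (A.submatrix e e).mulVec x a = 0 := congrFun hxker a
    simp only [Matrix.mulVec, dotProduct, Matrix.submatrix_apply] at h1
    have h2 : ∑ b, (r * (if e a = e b then 1 else 0) - C (e a) (e b)) * x b = 0 := by
      calc ∑ b, (r * (if e a = e b then 1 else 0) - C (e a) (e b)) * x b
          = ∑ b, A (e a) (e b) * x b :=
            Finset.sum_congr rfl fun b _ => by rw [hAapp]
      _ = 0 := h1
    have h3 : ∀ b, (if e a = e b then (1:ℝ) else 0) = if a = b then 1 else 0 := by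
      intro b; by_cases hab : a = b
      · simp [hab]
      · rw [if_neg hab, if_neg (fun hh => hab (he hh))]
    have h4 : ∑ b, (r * (if a = b then (1:ℝ) else 0) - C (e a) (e b)) * x b = 0 := by
      calc ∑ b, (r * (if a = b then (1:ℝ) else 0) - C (e a) (e b)) * x b
          = ∑ b, (r * (if e a = e b then 1 else 0) - C (e a) (e b)) * x b :=
            Finset.sum_congr rfl fun b _ => by rw [h3]
      _ = 0 := h2
    have h5 : ∑ b, (r * (if a = b then (1:ℝ) else 0) - C (e a) (e b)) * x b
        = r * x a - ∑ b, C (e a) (e b) * x b := by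
      have hsplit : ∀ b, (r * (if a = b then (1:ℝ) else 0) - C (e a) (e b)) * x b
          = r * (if a = b then (1:ℝ) else 0) * x b - C (e a) (e b) * x b := fun b => by ring
      rw [Finset.sum_congr rfl fun b _ => hsplit b, Finset.sum_sub_distrib]
      congr 1
      rw [Finset.sum_eq_single a]
      · simp
      · intro b _ hba; simp [Ne.symm hba]
      · intro hh; exact absurd (Finset.mem_univ a) hh
    rw [h5] at h4; linarith
  -- build the extended nonnegative vector z
  set z : Fin k → ℝ := fun i => if h : ∃ a, e a = i then |x h.choose| else 0 with hz_def
  have hze : ∀ a, z (e a) = |x a| := by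
    intro a
    have hex : ∃ b, e b = e a := ⟨a, rfl⟩
    have : hex.choose = a := he hex.choose_spec
    simp only [hz_def, dif_pos hex, this]
  have hz0 : ∀ i, 0 ≤ z i := by
    intro i; simp only [hz_def]; split
    · exact abs_nonneg _
    · rfl
  have hzi0 : z i0 = 0 := by
    simp only [hz_def]
    rw [dif_neg]
    rintro ⟨a, ha⟩; exact hi0 a ha
  obtain ⟨a0, ha0⟩ : ∃ a, x a ≠ 0 := Function.ne_iff.1 hx0
  have hzj0 : 0 < z (e a0) := by rw [hze]; exact abs_pos.2 ha0
  -- subinvariance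
  have hsub : ∀ i, r * z i ≤ C.mulVec z i := by
    intro i
    by_cases hi : ∃ a, e a = i
    · obtain ⟨a, rfl⟩ := hi
      have h1 : C.mulVec z (e a) = ∑ j, C (e a) j * z j := rfl
      have h2 : ∑ b, C (e a) (e b) * z (e b) ≤ ∑ j, C (e a) j * z j := by
        have := Finset.sum_le_sum_of_subset_of_nonneg
          (Finset.subset_univ (Finset.univ.image e))
          (f := fun j => C (e a) j * z j)
          (fun j _ _ => mul_nonneg (hC (e a) j) (hz0 j))
        rw [Finset.sum_image (fun b _ c _ h => he h)] at this
        exact this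
      have h3 : |∑ b, C (e a) (e b) * x b| ≤ ∑ b, C (e a) (e b) * z (e b) := by
        refine (Finset.abs_sum_le_sum_abs _ _).trans ?_
        refine Finset.sum_le_sum fun b _ => ?_
        rw [abs_mul, abs_of_nonneg (hC (e a) (e b)), hze]
      rw [hCx a, abs_mul, abs_of_nonneg hr] at h3
      rw [h1, hze]
      linarith
    · have : z i = 0 := by simp only [hz_def]; rw [dif_neg hi]
      rw [this, mul_zero]
      simpa [Matrix.mulVec, dotProduct] using
        Finset.sum_nonneg fun j _ => mul_nonneg (hC i j) (hz0 j)
  -- dichotomy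
  by_cases heq : ∀ i, C.mulVec z i = r * z i
  · -- equality case: graph argument
    have hzero : ∀ jj : Fin k, Relation.ReflTransGen (fun a b : Fin k => A a b ≠ 0) i0 jj →
        z jj = 0 := by
      intro jj hpath
      induction hpath with
      | refl => exact hzi0
      | tail h1 h2 ih =>
        rename_i b c
        by_cases hbc : b = c
        · exact hbc ▸ ih
        · have hCbc : 0 < C b c := by
            have := hAapp b c
            rw [if_neg hbc] at this
            have hne : C b c ≠ 0 := by
              intro hcc; rw [hcc] at this; simp at this; exact h2 this
            exact lt_of_le_of_ne (hC b c) (Ne.symm hne)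
          have h0 : ∑ j, C b j * z j = 0 := by
            have := heq b
            simp only [Matrix.mulVec, dotProduct] at this
            rw [this, ih, mul_zero]
          have hall := (Finset.sum_eq_zero_iff_of_nonneg
            (fun j _ => mul_nonneg (hC b j) (hz0 j))).1 h0 c (Finset.mem_univ c)
          have := mul_eq_zero.1 hall
          rcases this with h | h
          · exact absurd h hCbc.ne'
          · exact h
    exact absurd (hzero (e a0) (hirr i0 (e a0))) hzj0.ne'
  · -- strict case
    push_neg at heq
    obtain ⟨i1, hi1⟩ := heq
    have hi1' : r * z i1 < C.mulVec z i1 := lt_of_le_of_ne (hsub i1) (Ne.symm hi1)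
    have hirrC : ∀ i j : Fin k, Relation.ReflTransGen
        (fun a b : Fin k => C a b ≠ 0 ∨ a = b) i j := by
      intro i j
      refine Relation.ReflTransGen.mono ?_ _ _ (hirr i j)
      intro a b hab
      by_cases h' : a = b
      · exact Or.inr h'
      · left
        intro hcc
        have := hAapp a b
        rw [if_neg h', hcc] at this
        simp at this
        exact hab this
    obtain ⟨N, hN⟩ := existsPowPos hC hirrC
    set P := (1 + C) ^ N with hP_def
    have hPpos : ∀ i j, 0 < P i j := hN
    set v : Fin k → ℝ := fun i => C.mulVec z i - r * z i with hv_def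
    have hv0 : ∀ i, 0 ≤ v i := fun i => sub_nonneg.2 (hsub i)
    have hvi1 : 0 < v i1 := sub_pos.2 hi1'
    set w : Fin k → ℝ := P.mulVec z with hw_def
    have hw : ∀ i, 0 < w i := by
      intro i
      have : P i (e a0) * z (e a0) ≤ ∑ j, P i j * z j :=
        Finset.single_le_sum (f := fun j => P i j * z j)
          (fun j _ => mul_nonneg (hPpos i j).le (hz0 j)) (Finset.mem_univ (e a0))
      have hpos : 0 < P i (e a0) * z (e a0) := mul_pos (hPpos i (e a0)) hzj0
      simp only [hw_def, Matrix.mulVec, dotProduct]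
      linarith
    have hcomm : C * P = P * C := by
      have : Commute C P := ((Commute.one_right C).add_right (Commute.refl C)).pow_right N
      exact this
    have hstep : ∀ i, r * w i < C.mulVec w i := by
      intro i
      have h1 : C.mulVec w i = P.mulVec (C.mulVec z) i := by
        rw [hw_def, Matrix.mulVec_mulVec, hcomm, ← Matrix.mulVec_mulVec]
      have hCz : C *ᵥ z = v + r • z := by
        funext j
        simp only [hv_def, Pi.add_apply, Pi.smul_apply, smul_eq_mul]
        ring
      have h2 : P.mulVec (C.mulVec z) i = P.mulVec v i + r * w i := by
        rw [hCz, Matrix.mulVec_add, Matrix.mulVec_smul]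
        simp [hw_def]
      have h3 : 0 < P.mulVec v i := by
        have hterm : P i i1 * v i1 ≤ ∑ j, P i j * v j :=
          Finset.single_le_sum (f := fun j => P i j * v j)
            (fun j _ => mul_nonneg (hPpos i j).le (hv0 j)) (Finset.mem_univ i1)
        have := mul_pos (hPpos i i1) hvi1
        simp only [Matrix.mulVec, dotProduct]
        linarith
      rw [h1, h2]
      linarith
    obtain ⟨i2, -, hmin⟩ := Finset.exists_min_image Finset.univ
      (fun i => C.mulVec w i / w i) ⟨⟨0, hk⟩, Finset.mem_univ _⟩
    set s := C.mulVec w i2 / w i2 with hs_def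
    have hrs : r < s := by
      rw [hs_def, lt_div_iff₀ (hw i2)]
      exact hstep i2
    have hsub2 : ∀ i, s * w i ≤ C.mulVec w i := by
      intro i
      have := hmin i (Finset.mem_univ i)
      rw [hs_def] at this ⊢
      calc s * w i ≤ (C.mulVec w i / w i) * w i := by
            exact mul_le_mul_of_nonneg_right this (hw i).le
      _ = C.mulVec w i := div_mul_cancel₀ _ (hw i).ne'
    have := le_specRad_of_subinvariant hC hw hk (hr.trans hrs.le) hsub2
    rw [← hr_def] at this
    linarith


theorem fsai_LAU_leading_principal_submatrix (n : ℕ) (hn : 2 ≤ n)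
    (A : Matrix (Fin n) (Fin n) ℝ)
    (hA : IsSingularMMatrix A) (hirr : IsIrreducibleMatrix A)
    (SL SU : Set (Fin n × Fin n))
    (hSL1 : SL ⊆ {p : Fin n × Fin n | p.2 ≤ p.1})
    (hSL2 : ∀ i : Fin n, (i, i) ∈ SL)
    (hSL3 : ((⟨n - 1, by omega⟩ : Fin n), (⟨n - 2, by omega⟩ : Fin n)) ∉ SL)
    (hSU1 : SU ⊆ {p : Fin n × Fin n | p.1 ≤ p.2})
    (hSU2 : ∀ i : Fin n, (i, i) ∈ SU)
    (hSU3 : ((⟨n - 2, by omega⟩ : Fin n), (⟨n - 1, by omega⟩ : Fin n)) ∉ SU)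
    (L U : Matrix (Fin n) (Fin n) ℝ)
    (hL : IsFSAILowerFactor A L SL) (hU : IsFSAIUpperFactor A U SU)
    (B : Matrix (Fin (n - 1)) (Fin (n - 1)) ℝ)
    (hB : B = A.submatrix (fun i : Fin (n - 1) => (⟨i.1, by omega⟩ : Fin n))
      (fun j : Fin (n - 1) => (⟨j.1, by omega⟩ : Fin n)))
    (LF UF : Matrix (Fin (n - 1)) (Fin (n - 1)) ℝ)
    (hLF : IsFSAILowerFactor B LF
      {p : Fin (n - 1) × Fin (n - 1) |
        ((⟨p.1.1, by omega⟩ : Fin n), (⟨p.2.1, by omega⟩ : Fin n)) ∈ SL})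
    (hUF : IsFSAIUpperFactor B UF
      {p : Fin (n - 1) × Fin (n - 1) |
        ((⟨p.1.1, by omega⟩ : Fin n), (⟨p.2.1, by omega⟩ : Fin n)) ∈ SU}) :
    ∀ i j : Fin (n - 1),
      (L * A * U) (⟨i.1, by omega⟩ : Fin n) (⟨j.1, by omega⟩ : Fin n)
        = (LF * B * UF) i j := by
  classical
  obtain ⟨m, rfl⟩ : ∃ m, n = m + 1 := ⟨n - 1, by omega⟩
  have hm1 : (0:ℕ) < m + 1 := Nat.succ_pos m
  -- matrices restricted to the leading principal block
  set L' : Matrix (Fin m) (Fin m) ℝ := L.submatrix Fin.castSucc Fin.castSucc with hL'def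
  set U' : Matrix (Fin m) (Fin m) ℝ := U.submatrix Fin.castSucc Fin.castSucc with hU'def
  set Bm : Matrix (Fin m) (Fin m) ℝ := A.submatrix Fin.castSucc Fin.castSucc with hBmdef
  have hBab : ∀ a b : Fin m, B a b = Bm a b := by
    intro a b; rw [hB]; rfl
  -- reduction of products to the leading block
  have hLA : ∀ (a : Fin m) (c : Fin (m+1)),
      (L * A) a.castSucc c = ∑ k : Fin m, L a.castSucc k.castSucc * A k.castSucc c := by
    intro a c
    rw [Matrix.mul_apply, Fin.sum_univ_castSucc, hL.1 a.castSucc (Fin.last m)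
      (Fin.castSucc_lt_last a), zero_mul, add_zero]
  have hAU : ∀ (c : Fin (m+1)) (b : Fin m),
      (A * U) c b.castSucc = ∑ l : Fin m, A c l.castSucc * U l.castSucc b.castSucc := by
    intro c b
    rw [Matrix.mul_apply, Fin.sum_univ_castSucc, hU.1 (Fin.last m) b.castSucc
      (Fin.castSucc_lt_last b), mul_zero, add_zero]
  have hL'B : ∀ a b : Fin m, (L' * Bm) a b = (L * A) a.castSucc b.castSucc := by
    intro a b
    rw [hLA a b.castSucc, Matrix.mul_apply]
    exact Finset.sum_congr rfl fun k _ => by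
      rw [hL'def, hBmdef, Matrix.submatrix_apply, Matrix.submatrix_apply]
  have hBU' : ∀ a b : Fin m, (Bm * U') a b = (A * U) a.castSucc b.castSucc := by
    intro a b
    rw [hAU a.castSucc b, Matrix.mul_apply]
    exact Finset.sum_congr rfl fun l _ => by
      rw [hU'def, hBmdef, Matrix.submatrix_apply, Matrix.submatrix_apply]
  -- products with the given leading submatrix B, expressed through Bm
  have hLFB : ∀ a b : Fin m, (LF * B) a b = ∑ k : Fin m, LF a k * Bm k b := by
    intro a b
    rw [Matrix.mul_apply]
    exact Finset.sum_congr rfl fun k _ => by rw [hBab]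
  have hBUF : ∀ a b : Fin m, (B * UF) a b = ∑ k : Fin m, Bm a k * UF k b := by
    intro a b
    rw [Matrix.mul_apply]
    exact Finset.sum_congr rfl fun k _ => by rw [hBab]
  -- uniqueness of the lower factor
  have hLFeq : ∀ a b : Fin m, LF a b = L' a b := by
    intro a b
    set T : Finset (Fin m) :=
      Finset.univ.filter (fun k : Fin m => ((a.castSucc : Fin (m+1)), k.castSucc) ∈ SL) with hT
    set d : Fin m → ℝ := fun k => LF a k - L' a k with hd
    have hd_off : ∀ k, k ∉ T → d k = 0 := by
      intro k hk
      have hmem : ((a.castSucc : Fin (m+1)), k.castSucc) ∈ SL → False := fun hh =>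
        hk (Finset.mem_filter.2 ⟨Finset.mem_univ k, hh⟩)
      have h1 : LF a k = 0 := hLF.2.1 (a, k) (fun hh => hmem hh)
      have h2 : L' a k = 0 := by
        rw [hL'def, Matrix.submatrix_apply]
        exact hL.2.1 (a.castSucc, k.castSucc) (fun hh => hmem hh)
      rw [hd]; simp [h1, h2]
    have hd_sys : ∀ b' : Fin m, b' ∈ T → ∑ k : Fin m, d k * Bm k b' = 0 := by
      intro b' hb'
      have hbmem : ((a.castSucc : Fin (m+1)), b'.castSucc) ∈ SL := (Finset.mem_filter.1 hb').2
      have h1 : (LF * B) a b' = if a = b' then 1 else 0 := hLF.2.2 (a, b') hbmem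
      have h2 : (L' * Bm) a b' = if a = b' then 1 else 0 := by
        rw [hL'B a b', hL.2.2 (a.castSucc, b'.castSucc) hbmem]
        by_cases hab : a = b'
        · simp [hab]
        · rw [if_neg hab, if_neg (fun hh => hab (Fin.castSucc_inj.1 hh))]
      have h3 : ∑ k : Fin m, d k * Bm k b'
          = (∑ k : Fin m, LF a k * Bm k b') - (L' * Bm) a b' := by
        rw [Matrix.mul_apply, ← Finset.sum_sub_distrib]
        exact Finset.sum_congr rfl fun k _ => by rw [hd]; ring
      rw [h3, ← hLFB, h1, h2, sub_self]
    set g : Fin T.card → Fin m := fun a' => ((T.orderIsoOfFin rfl) a' : Fin m) with hg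
    have hg_inj : Function.Injective g := fun a' b' h =>
      (T.orderIsoOfFin rfl).injective (Subtype.ext h)
    have hg_mem : ∀ a', g a' ∈ T := fun a' => ((T.orderIsoOfFin rfl) a').2
    have hg_surj : ∀ k ∈ T, ∃ a', g a' = k := by
      intro k hk
      obtain ⟨a', ha'⟩ := (T.orderIsoOfFin rfl).surjective ⟨k, hk⟩
      exact ⟨a', congrArg Subtype.val ha'⟩
    set e : Fin T.card → Fin (m+1) := fun a' => (g a').castSucc with he_def
    have he_inj : Function.Injective e := fun a' b' h => hg_inj (Fin.castSucc_inj.1 h)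
    have he_last : ∀ a', e a' ≠ Fin.last m := fun a' => (Fin.castSucc_lt_last _).ne
    have hdet := key_det_ne_zero hm1 hA hirr e he_inj (Fin.last m) he_last
    have hker : (A.submatrix e e)ᵀ.mulVec (fun a' => d (g a')) = 0 := by
      funext b'
      simp only [Matrix.mulVec, dotProduct, Matrix.transpose_apply, Matrix.submatrix_apply,
        Pi.zero_apply]
      have step1 : ∑ a', A (e a') (e b') * d (g a') = ∑ k ∈ T, d k * Bm k (g b') :=
        Finset.sum_bij (fun a' _ => g a') (fun a' _ => hg_mem a') (fun a₁ _ a₂ _ h => hg_inj h)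
          (fun k hk => by obtain ⟨a', ha'⟩ := hg_surj k hk; exact ⟨a', Finset.mem_univ _, ha'⟩)
          (fun a' _ => by rw [hBmdef, Matrix.submatrix_apply, he_def] <;> ring)
      have step2 : ∑ k ∈ T, d k * Bm k (g b') = ∑ k : Fin m, d k * Bm k (g b') :=
        Finset.sum_subset (Finset.subset_univ T)
          (fun k _ hk => by rw [hd_off k hk, zero_mul])
      rw [step1, step2, hd_sys (g b') (hg_mem b')]
    have hx0 : (fun a' => d (g a')) = (0 : Fin T.card → ℝ) := by
      by_contra hxne
      apply hdet
      rw [← Matrix.det_transpose]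
      exact Matrix.exists_mulVec_eq_zero_iff.1 ⟨_, hxne, hker⟩
    have hdb : d b = 0 := by
      by_cases hbT : b ∈ T
      · obtain ⟨a', ha'⟩ := hg_surj b hbT
        have := congrFun hx0 a'
        rw [ha'] at this
        exact this
      · exact hd_off b hbT
    have hfin : LF a b - L' a b = 0 := hdb
    linarith
  -- uniqueness of the upper factor
  have hUFeq : ∀ a b : Fin m, UF a b = U' a b := by
    intro a b
    set T : Finset (Fin m) :=
      Finset.univ.filter (fun k : Fin m => ((k.castSucc : Fin (m+1)), b.castSucc) ∈ SU) with hT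
    set d : Fin m → ℝ := fun k => UF k b - U' k b with hd
    have hd_off : ∀ k, k ∉ T → d k = 0 := by
      intro k hk
      have hmem : ((k.castSucc : Fin (m+1)), b.castSucc) ∈ SU → False := fun hh =>
        hk (Finset.mem_filter.2 ⟨Finset.mem_univ k, hh⟩)
      have h1 : UF k b = 0 := hUF.2.1 (k, b) (fun hh => hmem hh)
      have h2 : U' k b = 0 := by
        rw [hU'def, Matrix.submatrix_apply]
        exact hU.2.1 (k.castSucc, b.castSucc) (fun hh => hmem hh)
      rw [hd]; simp [h1, h2]
    have hd_sys : ∀ a' : Fin m, a' ∈ T → ∑ k : Fin m, Bm a' k * d k = 0 := by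
      intro a' ha'
      have hbmem : ((a'.castSucc : Fin (m+1)), b.castSucc) ∈ SU := (Finset.mem_filter.1 ha').2
      have h1 : (B * UF) a' b = if a' = b then 1 else 0 := hUF.2.2 (a', b) hbmem
      have h2 : (Bm * U') a' b = if a' = b then 1 else 0 := by
        rw [hBU' a' b, hU.2.2 (a'.castSucc, b.castSucc) hbmem]
        by_cases hab : a' = b
        · simp [hab]
        · rw [if_neg hab, if_neg (fun hh => hab (Fin.castSucc_inj.1 hh))]
      have h3 : ∑ k : Fin m, Bm a' k * d k
          = (∑ k : Fin m, Bm a' k * UF k b) - (Bm * U') a' b := by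
        rw [Matrix.mul_apply, ← Finset.sum_sub_distrib]
        exact Finset.sum_congr rfl fun k _ => by rw [hd]; ring
      have h4 : ∑ k : Fin m, Bm a' k * UF k b = (B * UF) a' b := (hBUF a' b).symm
      rw [h3, h4, h1, h2, sub_self]
    set g : Fin T.card → Fin m := fun a' => ((T.orderIsoOfFin rfl) a' : Fin m) with hg
    have hg_inj : Function.Injective g := fun a' b' h =>
      (T.orderIsoOfFin rfl).injective (Subtype.ext h)
    have hg_mem : ∀ a', g a' ∈ T := fun a' => ((T.orderIsoOfFin rfl) a').2
    have hg_surj : ∀ k ∈ T, ∃ a', g a' = k := by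
      intro k hk
      obtain ⟨a', ha'⟩ := (T.orderIsoOfFin rfl).surjective ⟨k, hk⟩
      exact ⟨a', congrArg Subtype.val ha'⟩
    set e : Fin T.card → Fin (m+1) := fun a' => (g a').castSucc with he_def
    have he_inj : Function.Injective e := fun a' b' h => hg_inj (Fin.castSucc_inj.1 h)
    have he_last : ∀ a', e a' ≠ Fin.last m := fun a' => (Fin.castSucc_lt_last _).ne
    have hdet := key_det_ne_zero hm1 hA hirr e he_inj (Fin.last m) he_last
    have hker : (A.submatrix e e).mulVec (fun b' => d (g b')) = 0 := by
      funext a'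
      simp only [Matrix.mulVec, dotProduct, Matrix.submatrix_apply, Pi.zero_apply]
      have step1 : ∑ b', A (e a') (e b') * d (g b') = ∑ k ∈ T, Bm (g a') k * d k :=
        Finset.sum_bij (fun b' _ => g b') (fun b' _ => hg_mem b') (fun b₁ _ b₂ _ h => hg_inj h)
          (fun k hk => by obtain ⟨b', hb'⟩ := hg_surj k hk; exact ⟨b', Finset.mem_univ _, hb'⟩)
          (fun b' _ => by rw [hBmdef, Matrix.submatrix_apply, he_def] <;> ring)
      have step2 : ∑ k ∈ T, Bm (g a') k * d k = ∑ k : Fin m, Bm (g a') k * d k :=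
        Finset.sum_subset (Finset.subset_univ T)
          (fun k _ hk => by rw [hd_off k hk, mul_zero])
      rw [step1, step2, hd_sys (g a') (hg_mem a')]
    have hx0 : (fun b' => d (g b')) = (0 : Fin T.card → ℝ) := by
      by_contra hxne
      apply hdet
      exact Matrix.exists_mulVec_eq_zero_iff.1 ⟨_, hxne, hker⟩
    have hda : d a = 0 := by
      by_cases haT : a ∈ T
      · obtain ⟨b', hb'⟩ := hg_surj a haT
        have := congrFun hx0 b'
        rw [hb'] at this
        exact this
      · exact hd_off a haT
    have hfin : UF a b - U' a b = 0 := hda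
    linarith
  -- putting everything together
  intro i j
  have hLFBm : ∀ a b : Fin m, (LF * B) a b = (L' * Bm) a b := by
    intro a b
    rw [hLFB, Matrix.mul_apply]
    exact Finset.sum_congr rfl fun k _ => by rw [hLFeq]
  show (L * A * U) (Fin.castSucc (i : Fin m)) (Fin.castSucc (j : Fin m)) = (LF * B * UF) i j
  have main : (L * A * U) (Fin.castSucc (i : Fin m)) (Fin.castSucc (j : Fin m))
      = ∑ l : Fin m, (LF * B) (i : Fin m) l * UF l (j : Fin m) := by
    calc (L * A * U) (Fin.castSucc (i : Fin m)) (Fin.castSucc (j : Fin m))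
        = ∑ l : Fin m, (L * A) (Fin.castSucc (i : Fin m)) l.castSucc
            * U l.castSucc (Fin.castSucc (j : Fin m)) := by
          rw [Matrix.mul_apply, Fin.sum_univ_castSucc, hU.1 (Fin.last m)
            (Fin.castSucc (j : Fin m)) (Fin.castSucc_lt_last _), mul_zero, add_zero]
    _ = ∑ l : Fin m, (L' * Bm) (i : Fin m) l * U' l (j : Fin m) := by
          refine Finset.sum_congr rfl fun l _ => ?_
          rw [hL'B, hU'def, Matrix.submatrix_apply]
    _ = ∑ l : Fin m, (LF * B) (i : Fin m) l * UF l (j : Fin m) := by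
          refine Finset.sum_congr rfl fun l _ => ?_
          rw [hLFBm, hUFeq]
  rw [main]
  exact (Matrix.mul_apply (M := LF * B) (N := UF)).symm
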